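/- For the bi-objective problem ORZR with f1 = OneRoyalRoad and f2 = ZeroRoyalRoad on bit-strings of length n = b·ℓ (b > 1), the Pareto front, i.e. the image of the Pareto set under (f1, f2), equals exactly { (i·ℓ, (b−i)·ℓ) : i ∈ {0, 1, …, b} }. -/
import Mathlib


open Finset

/-- Number of one-bits of a bit-string. -/
def onesCount {n : ℕ} (x : Fin n → Bool) : ℕ :=
  (Finset.univ.filter fun i => x i = true).card

/-- Number of zero-bits of a bit-string. -/
def zerosCount {n : ℕ} (x : Fin n → Bool) : ℕ :=
  (Finset.univ.filter fun i => x i = false).card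

/-- Number of leading one-bits. -/
def leadingOnes {n : ℕ} (x : Fin n → Bool) : ℕ :=
  (Finset.univ.filter fun i : Fin n => ∀ j : Fin n, j ≤ i → x j = true).card

/-- Number of trailing zero-bits. -/
def trailingZeroes {n : ℕ} (x : Fin n → Bool) : ℕ :=
  (Finset.univ.filter fun i : Fin n => ∀ j : Fin n, i ≤ j → x j = false).card

/-- `y` dominates `x` for the bi-objective maximisation problem `(f1, f2)`. -/
def dominates {n : ℕ} (f1 f2 : (Fin n → Bool) → ℕ) (y x : Fin n → Bool) : Prop :=
  f1 x ≤ f1 y ∧ f2 x ≤ f2 y ∧ (f1 x < f1 y ∨ f2 x < f2 y)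

/-- `x` is Pareto optimal: no solution dominates it. -/
def paretoOptimal {n : ℕ} (f1 f2 : (Fin n → Bool) → ℕ) (x : Fin n → Bool) : Prop :=
  ∀ y, ¬ dominates f1 f2 y x

/-- `x` is a non-global Pareto local optimum: not Pareto optimal, and not dominated by
any bit-string at Hamming distance exactly 1. -/
def nonGlobalParetoLocalOpt {n : ℕ} (f1 f2 : (Fin n → Bool) → ℕ) (x : Fin n → Bool) : Prop :=
  ¬ paretoOptimal f1 f2 x ∧ ∀ y, hammingDist y x = 1 → ¬ dominates f1 f2 y x

/-- The ZeroJump function with jump parameter `k`. -/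
def zeroJump (n k : ℕ) (x : Fin n → Bool) : ℕ :=
  if zerosCount x ≤ n - k ∨ x = (fun _ => false) then k + zerosCount x else n - zerosCount x

/-- The OneJump function with jump parameter `k`. -/
def oneJump (n k : ℕ) (x : Fin n → Bool) : ℕ :=
  if onesCount x ≤ n - k ∨ x = (fun _ => true) then k + onesCount x else n - onesCount x

/-- Block `j` (0-indexed) of the bit-string `x` (with `b` blocks of length `ℓ`) is all-ones. -/
def blockAllOnes (b ℓ : ℕ) (x : Fin (b * ℓ) → Bool) (j : Fin b) : Prop :=
  ∀ i : Fin (b * ℓ), (i : ℕ) / ℓ = (j : ℕ) → x i = true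

/-- Block `j` (0-indexed) of the bit-string `x` is all-zeros. -/
def blockAllZeros (b ℓ : ℕ) (x : Fin (b * ℓ) → Bool) (j : Fin b) : Prop :=
  ∀ i : Fin (b * ℓ), (i : ℕ) / ℓ = (j : ℕ) → x i = false

instance (b ℓ : ℕ) (x : Fin (b * ℓ) → Bool) (j : Fin b) : Decidable (blockAllOnes b ℓ x j) := by
  unfold blockAllOnes; infer_instance

instance (b ℓ : ℕ) (x : Fin (b * ℓ) → Bool) (j : Fin b) : Decidable (blockAllZeros b ℓ x j) := by
  unfold blockAllZeros; infer_instance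

/-- OneRoyalRoad: `ℓ` times the number of all-ones blocks. -/
def oneRoyalRoad (b ℓ : ℕ) (x : Fin (b * ℓ) → Bool) : ℕ :=
  ℓ * (Finset.univ.filter fun j : Fin b => blockAllOnes b ℓ x j).card

/-- ZeroRoyalRoad: `ℓ` times the number of all-zeros blocks. -/
def zeroRoyalRoad (b ℓ : ℕ) (x : Fin (b * ℓ) → Bool) : ℕ :=
  ℓ * (Finset.univ.filter fun j : Fin b => blockAllZeros b ℓ x j).card

/-- Number of one-bits in block `j` of `x`. -/
def blockOnes (b ℓ : ℕ) (x : Fin (b * ℓ) → Bool) (j : Fin b) : ℕ :=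
  (Finset.univ.filter fun i : Fin (b * ℓ) => (i : ℕ) / ℓ = (j : ℕ) ∧ x i = true).card

/-- Number of zero-bits in block `j` of `x`. -/
def blockZeros (b ℓ : ℕ) (x : Fin (b * ℓ) → Bool) (j : Fin b) : ℕ :=
  (Finset.univ.filter fun i : Fin (b * ℓ) => (i : ℕ) / ℓ = (j : ℕ) ∧ x i = false).card

/-- Canonical string: first `i` blocks all ones, rest zeros. -/
def xcan (b ℓ i : ℕ) : Fin (b * ℓ) → Bool := fun j => decide ((j : ℕ) / ℓ < i)

lemma blockAllOnes_xcan (b ℓ : ℕ) (hℓ : 1 ≤ ℓ) (i : ℕ) (j : Fin b) :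
    blockAllOnes b ℓ (xcan b ℓ i) j ↔ (j : ℕ) < i := by
  constructor
  · intro h
    have hj : (j : ℕ) * ℓ < b * ℓ := (Nat.mul_lt_mul_right hℓ).mpr j.isLt
    have hdiv : ((j : ℕ) * ℓ) / ℓ = (j : ℕ) := Nat.mul_div_cancel _ hℓ
    have := h ⟨(j : ℕ) * ℓ, hj⟩ hdiv
    simpa [xcan, hdiv] using this
  · intro h i' hi'
    simp [xcan, hi', h]

lemma blockAllZeros_xcan (b ℓ : ℕ) (hℓ : 1 ≤ ℓ) (i : ℕ) (j : Fin b) :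
    blockAllZeros b ℓ (xcan b ℓ i) j ↔ i ≤ (j : ℕ) := by
  constructor
  · intro h
    have hj : (j : ℕ) * ℓ < b * ℓ := (Nat.mul_lt_mul_right hℓ).mpr j.isLt
    have hdiv : ((j : ℕ) * ℓ) / ℓ = (j : ℕ) := Nat.mul_div_cancel _ hℓ
    have := h ⟨(j : ℕ) * ℓ, hj⟩ hdiv
    simp [xcan, hdiv] at this
    omega
  · intro h i' hi'
    simp [xcan, hi']
    omega

lemma card_filter_lt_fin (b i : ℕ) (hi : i ≤ b) :
    (Finset.univ.filter fun j : Fin b => (j : ℕ) < i).card = i := by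
  have : (Finset.univ.filter fun j : Fin b => (j : ℕ) < i) =
      (Finset.range i).attachFin (fun m hm => lt_of_lt_of_le (Finset.mem_range.mp hm) hi) := by
    ext j
    simp [Finset.mem_attachFin]
  rw [this, Finset.card_attachFin, Finset.card_range]

lemma oneRoyalRoad_xcan (b ℓ : ℕ) (hℓ : 1 ≤ ℓ) (i : ℕ) (hi : i ≤ b) :
    oneRoyalRoad b ℓ (xcan b ℓ i) = ℓ * i := by
  unfold oneRoyalRoad
  congr 1
  rw [show (Finset.univ.filter fun j : Fin b => blockAllOnes b ℓ (xcan b ℓ i) j) =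
      (Finset.univ.filter fun j : Fin b => (j : ℕ) < i) by
    apply Finset.filter_congr; intro j _; simp [blockAllOnes_xcan b ℓ hℓ]]
  exact card_filter_lt_fin b i hi

lemma zeroRoyalRoad_xcan (b ℓ : ℕ) (hℓ : 1 ≤ ℓ) (i : ℕ) (hi : i ≤ b) :
    zeroRoyalRoad b ℓ (xcan b ℓ i) = ℓ * (b - i) := by
  unfold zeroRoyalRoad
  congr 1
  rw [show (Finset.univ.filter fun j : Fin b => blockAllZeros b ℓ (xcan b ℓ i) j) =
      (Finset.univ.filter fun j : Fin b => ¬ ((j : ℕ) < i)) by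
    apply Finset.filter_congr; intro j _
    simp [blockAllZeros_xcan b ℓ hℓ]]
  have h := Finset.card_filter_add_card_filter_not
    (s := (Finset.univ : Finset (Fin b))) (p := fun j : Fin b => (j : ℕ) < i)
  rw [card_filter_lt_fin b i hi] at h
  simp only [Finset.card_univ, Fintype.card_fin] at h
  omega

lemma sum_blocks_le (b ℓ : ℕ) (hℓ : 1 ≤ ℓ) (x : Fin (b * ℓ) → Bool) :
    (Finset.univ.filter fun j : Fin b => blockAllOnes b ℓ x j).card +
      (Finset.univ.filter fun j : Fin b => blockAllZeros b ℓ x j).card ≤ b := by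
  have hdisj : Disjoint (Finset.univ.filter fun j : Fin b => blockAllOnes b ℓ x j)
      (Finset.univ.filter fun j : Fin b => blockAllZeros b ℓ x j) := by
    rw [Finset.disjoint_filter]
    intro j _ h1 h2
    have hj : (j : ℕ) * ℓ < b * ℓ := (Nat.mul_lt_mul_right hℓ).mpr j.isLt
    have hdiv : ((j : ℕ) * ℓ) / ℓ = (j : ℕ) := Nat.mul_div_cancel _ hℓ
    have := h1 ⟨(j : ℕ) * ℓ, hj⟩ hdiv
    have := h2 ⟨(j : ℕ) * ℓ, hj⟩ hdiv
    simp_all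
  calc _ = ((Finset.univ.filter fun j : Fin b => blockAllOnes b ℓ x j) ∪
        (Finset.univ.filter fun j : Fin b => blockAllZeros b ℓ x j)).card :=
      (Finset.card_union_of_disjoint hdisj).symm
    _ ≤ (Finset.univ : Finset (Fin b)).card := Finset.card_le_card (Finset.subset_univ _)
    _ = b := by simp

lemma xcan_pareto (b ℓ : ℕ) (hℓ : 1 ≤ ℓ) (i : ℕ) (hi : i ≤ b) :
    paretoOptimal (oneRoyalRoad b ℓ) (zeroRoyalRoad b ℓ) (xcan b ℓ i) := by
  intro y hy
  obtain ⟨h1, h2, h3⟩ := hy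
  rw [oneRoyalRoad_xcan b ℓ hℓ i hi] at h1 h3
  rw [zeroRoyalRoad_xcan b ℓ hℓ i hi] at h2 h3
  unfold oneRoyalRoad at h1 h3
  unfold zeroRoyalRoad at h2 h3
  have hsum := sum_blocks_le b ℓ hℓ y
  have hℓ0 : 0 < ℓ := hℓ
  rcases h3 with h3 | h3
  · have hA := Nat.le_of_mul_le_mul_left h1 hℓ0
    have hZ := Nat.le_of_mul_le_mul_left h2 hℓ0
    have := Nat.lt_of_mul_lt_mul_left h3
    omega
  · have hA := Nat.le_of_mul_le_mul_left h1 hℓ0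
    have hZ := Nat.le_of_mul_le_mul_left h2 hℓ0
    have := Nat.lt_of_mul_lt_mul_left h3
    omega

/-- For ORZR on bit-strings of length n = b·ℓ with b > 1, the Pareto front,
i.e. the image of the Pareto set under (f1, f2), equals { (i·ℓ, (b−i)·ℓ) : 0 ≤ i ≤ b }. -/
theorem ORZR_pareto_front (b ℓ : ℕ) (hb : 1 < b) (hℓ : 1 ≤ ℓ) :
    {p : ℕ × ℕ | ∃ x : Fin (b * ℓ) → Bool,
        paretoOptimal (oneRoyalRoad b ℓ) (zeroRoyalRoad b ℓ) x ∧
          p = (oneRoyalRoad b ℓ x, zeroRoyalRoad b ℓ x)} =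
      {p : ℕ × ℕ | ∃ i : ℕ, i ≤ b ∧ p = (i * ℓ, (b - i) * ℓ)} := by
  ext p
  simp only [Set.mem_setOf_eq]
  constructor
  · rintro ⟨x, hpar, rfl⟩
    set A := (Finset.univ.filter fun j : Fin b => blockAllOnes b ℓ x j).card with hA
    set Z := (Finset.univ.filter fun j : Fin b => blockAllZeros b ℓ x j).card with hZ
    have hsum : A + Z ≤ b := sum_blocks_le b ℓ hℓ x
    have hAb : A ≤ b := by omega
    have hZeq : Z = b - A := by
      by_contra hne
      have hZlt : Z < b - A := by omega
      apply hpar (xcan b ℓ A)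
      refine ⟨?_, ?_, ?_⟩
      · rw [oneRoyalRoad_xcan b ℓ hℓ A hAb]; unfold oneRoyalRoad; rw [← hA]
      · rw [zeroRoyalRoad_xcan b ℓ hℓ A hAb]; unfold zeroRoyalRoad; rw [← hZ]
        exact Nat.mul_le_mul_left ℓ (le_of_lt hZlt)
      · right
        rw [zeroRoyalRoad_xcan b ℓ hℓ A hAb]; unfold zeroRoyalRoad; rw [← hZ]
        exact (Nat.mul_lt_mul_left hℓ).mpr hZlt
    refine ⟨A, hAb, ?_⟩
    unfold oneRoyalRoad zeroRoyalRoad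
    rw [← hA, ← hZ, hZeq, Nat.mul_comm, Nat.mul_comm ℓ]
  · rintro ⟨i, hi, rfl⟩
    exact ⟨xcan b ℓ i, xcan_pareto b ℓ hℓ i hi, by
      rw [oneRoyalRoad_xcan b ℓ hℓ i hi, zeroRoyalRoad_xcan b ℓ hℓ i hi,
        Nat.mul_comm ℓ i, Nat.mul_comm ℓ (b - i)]⟩
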